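/- Let F : ℝ → ℝ be C⁵, c̃ ∈ ℝ, and define u(x,t) = −1/2 + (1/t)·F(x − c̃·ln t) for t > 0. Then u satisfies u_t + u_x + (u²)_x + u_xxxxt = 0 on ℝ × (0,∞) if and only if c̃·F⁽⁵⁾ + F⁽⁴⁾ + (c̃·F − F²)' + F = 0 on ℝ. -/

import Mathlib

/-- iterated derivative of `c + b * F (y - a)` -/
lemma iterDeriv_shift_aux (F : ℝ → ℝ) (hF : ContDiff ℝ 5 F) (c b a : ℝ) (x : ℝ) :
    iteratedDeriv 4 (fun y => c + b * F (y - a)) x = b * iteratedDeriv 4 F (x - a) := by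
  have h1 : (fun y => c + b * F (y - a)) = (fun y => c + (fun z => b * F (z - a)) y) := rfl
  have h2 : iteratedDeriv 4 (fun y => c + b * F (y - a)) x
      = iteratedDeriv 4 (fun z => b * F (z - a)) x := by
    rw [show (4:ℕ) = 3 + 1 from rfl, iteratedDeriv_succ', deriv_const_add',
      ← iteratedDeriv_succ']
  rw [h2]
  have hFa : ContDiff ℝ 4 (fun z => F (z - a)) := by
    have : ContDiff ℝ 4 F := hF.of_le (by norm_num)
    exact this.comp (contDiff_id.sub contDiff_const)
  have h3 : iteratedDeriv 4 (fun z => b * F (z - a)) x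
      = b * iteratedDeriv 4 (fun z => F (z - a)) x := by
    simp_rw [← iteratedDerivWithin_univ]
    exact iteratedDerivWithin_const_mul (Set.mem_univ x) uniqueDiffOn_univ b (by exact_mod_cast hFa.contDiffWithinAt)
  rw [h3]
  have h4 : (fun z => F (z - a)) = (fun z => F (z + (-a))) := by
    funext z; rw [sub_eq_add_neg]
  rw [h4, iteratedDeriv_comp_add_const]
  simp [sub_eq_add_neg]

theorem rosenau_reduction_log_scaling
    (F : ℝ → ℝ) (hF : ContDiff ℝ 5 F) (ct : ℝ) :
    (∀ x t : ℝ, 0 < t →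
      (letI u : ℝ → ℝ → ℝ := fun x t => -(1 / 2) + (1 / t) * F (x - ct * Real.log t)
      deriv (fun s => u x s) t
        + deriv (fun y => u y t) x
        + deriv (fun y => (u y t) ^ 2) x
        + deriv (fun s => iteratedDeriv 4 (fun y => u y s) x) t = 0))
    ↔ (∀ ξ : ℝ, ct * iteratedDeriv 5 F ξ + iteratedDeriv 4 F ξ
        + deriv (fun y => ct * F y - (F y) ^ 2) ξ + F ξ = 0) := by
  have hFd : Differentiable ℝ F := hF.differentiable (by norm_num)
  have hF4d : Differentiable ℝ (iteratedDeriv 4 F) :=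
    hF.differentiable_iteratedDeriv 4 (by norm_num)
  set F1 := deriv F with hF1
  set F4 := iteratedDeriv 4 F with hF4
  set F5 := iteratedDeriv 5 F with hF5
  have hF5eq : F5 = deriv F4 := by rw [hF5, hF4, iteratedDeriv_succ]
  -- RHS deriv computation
  have hRderiv : ∀ ξ : ℝ, deriv (fun y => ct * F y - (F y) ^ 2) ξ
      = ct * F1 ξ - 2 * F ξ * F1 ξ := by
    intro ξ
    have h1 : HasDerivAt F (F1 ξ) ξ := (hFd ξ).hasDerivAt
    have h2 : HasDerivAt (fun y => ct * F y - (F y) ^ 2)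
        (ct * F1 ξ - 2 * F ξ ^ 1 * F1 ξ) ξ := (h1.const_mul ct).sub (h1.pow 2)
    simpa using h2.deriv
  -- the key pointwise PDE computation
  have key : ∀ x t : ℝ, 0 < t →
      (deriv (fun s => -(1/2) + (1/s) * F (x - ct * Real.log s)) t
        + deriv (fun y => -(1/2) + (1/t) * F (y - ct * Real.log t)) x
        + deriv (fun y => (-(1/2) + (1/t) * F (y - ct * Real.log t)) ^ 2) x
        + deriv (fun s => iteratedDeriv 4
            (fun y => -(1/2) + (1/s) * F (y - ct * Real.log s)) x) t)
      = -(1/t^2) * (ct * F5 (x - ct * Real.log t) + F4 (x - ct * Real.log t)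
          + (ct * F1 (x - ct * Real.log t)
            - 2 * F (x - ct * Real.log t) * F1 (x - ct * Real.log t))
          + F (x - ct * Real.log t)) := by
    intro x t ht
    have htne : t ≠ 0 := ht.ne'
    set ξ := x - ct * Real.log t with hξ
    -- derivative in t of 1/s
    have hinv : HasDerivAt (fun s : ℝ => 1/s) (-(1/t^2)) t := by
      simpa [one_div] using hasDerivAt_inv htne
    -- derivative in t of inner argument
    have harg : HasDerivAt (fun s : ℝ => x - ct * Real.log s) (-(ct * t⁻¹)) t := by
      simpa [mul_comm] using ((Real.hasDerivAt_log htne).const_mul ct).const_sub x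
    -- term 1
    have hT1 : HasDerivAt (fun s : ℝ => -(1/2) + (1/s) * F (x - ct * Real.log s))
        (-(1/t^2) * F ξ + (1/t) * (F1 ξ * -(ct * t⁻¹))) t := by
      have hcomp : HasDerivAt (fun s : ℝ => F (x - ct * Real.log s))
          (F1 ξ * -(ct * t⁻¹)) t := (hFd ξ).hasDerivAt.comp t harg
      exact (hinv.mul hcomp).const_add _
    -- term 2
    have hy : HasDerivAt (fun y : ℝ => y - ct * Real.log t) 1 x :=
      (hasDerivAt_id x).sub_const _
    have hycomp : HasDerivAt (fun y : ℝ => F (y - ct * Real.log t)) (F1 ξ) x := by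
      have := (hFd ξ).hasDerivAt.comp x hy; rw [mul_one] at this; exact this
    have hT2 : HasDerivAt (fun y : ℝ => -(1/2) + (1/t) * F (y - ct * Real.log t))
        ((1/t) * F1 ξ) x := (hycomp.const_mul (1/t)).const_add _
    -- term 3
    have hT3 : HasDerivAt (fun y : ℝ => (-(1/2) + (1/t) * F (y - ct * Real.log t)) ^ 2)
        (2 * (-(1/2) + (1/t) * F ξ) ^ 1 * ((1/t) * F1 ξ)) x := hT2.pow 2
    -- term 4: first rewrite the inner iterated derivative
    have hrw : (fun s : ℝ => iteratedDeriv 4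
          (fun y => -(1/2) + (1/s) * F (y - ct * Real.log s)) x)
        = (fun s : ℝ => (1/s) * F4 (x - ct * Real.log s)) := by
      funext s
      rw [iterDeriv_shift_aux F hF, hF4]
    have hT4 : HasDerivAt (fun s : ℝ => iteratedDeriv 4
          (fun y => -(1/2) + (1/s) * F (y - ct * Real.log s)) x)
        (-(1/t^2) * F4 ξ + (1/t) * (F5 ξ * -(ct * t⁻¹))) t := by
      rw [hrw]
      have hcomp : HasDerivAt (fun s : ℝ => F4 (x - ct * Real.log s))
          (F5 ξ * -(ct * t⁻¹)) t := by
        have := (hF4d ξ).hasDerivAt.comp t harg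
        rwa [← hF5eq] at this
      exact hinv.mul hcomp
    rw [hT1.deriv, hT2.deriv, hT3.deriv, hT4.deriv]
    field_simp
    ring
  constructor
  · intro h ξ
    have h1 := h ξ 1 one_pos
    simp only at h1
    have := key ξ 1 one_pos
    rw [this] at h1
    simp only [Real.log_one, mul_zero, sub_zero, one_pow] at h1 ⊢
    rw [hRderiv ξ]
    linarith
  · intro h x t ht
    simp only
    rw [key x t ht]
    have h2 := h (x - ct * Real.log t)
    rw [hRderiv (x - ct * Real.log t)] at h2
    rw [h2, mul_zero]
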